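/- Let ħ > 0 and let S, S′ ∈ Sp(2n,ℝ). The images of the closed ball of radius √ħ centered at the origin in ℝ²ⁿ under S and under S′ coincide if and only if S′ = SU for some matrix U that is both symplectic and orthogonal (i.e. U ∈ Sp(2n,ℝ) ∩ O(2n,ℝ)). -/

import Mathlib

open Matrix

noncomputable section

/-- The standard symplectic matrix `J = ((0, I), (-I, 0))`. -/
def stdJ (n : ℕ) : Matrix (Fin n ⊕ Fin n) (Fin n ⊕ Fin n) ℝ :=
  Matrix.fromBlocks 0 1 (-1) 0

/-- A real `2n × 2n` matrix is symplectic if `Sᵀ J S = J`. -/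
def IsSymplectic {n : ℕ} (S : Matrix (Fin n ⊕ Fin n) (Fin n ⊕ Fin n) ℝ) : Prop :=
  Sᵀ * stdJ n * S = stdJ n

namespace SympAux

variable {n : ℕ}

lemma dot_self_nonneg (z : (Fin n ⊕ Fin n) → ℝ) : 0 ≤ z ⬝ᵥ z :=
  Finset.sum_nonneg fun i _ => mul_self_nonneg _

lemma dot_mulVec_mulVec (U : Matrix (Fin n ⊕ Fin n) (Fin n ⊕ Fin n) ℝ)
    (x y : (Fin n ⊕ Fin n) → ℝ) :
    (U *ᵥ x) ⬝ᵥ (U *ᵥ y) = x ⬝ᵥ ((Uᵀ * U) *ᵥ y) := by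
  rw [← Matrix.mulVec_mulVec, Matrix.dotProduct_mulVec x, Matrix.vecMul_transpose]

lemma J_mul_J : stdJ n * stdJ n = -1 := by
  simp [stdJ, Matrix.fromBlocks_multiply]
  rw [← Matrix.fromBlocks_one]
  ext (i | i) (j | j) <;> simp [Matrix.fromBlocks]

lemma isUnit_of_symplectic {S : Matrix (Fin n ⊕ Fin n) (Fin n ⊕ Fin n) ℝ}
    (hS : IsSymplectic S) : IsUnit S := by
  apply IsUnit.of_mul_eq_one_right ((-(stdJ n)) * Sᵀ * stdJ n)
  have : (-(stdJ n)) * (Sᵀ * stdJ n * S) = (-(stdJ n)) * stdJ n := by rw [hS]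
  calc (-(stdJ n)) * Sᵀ * stdJ n * S
      = (-(stdJ n)) * (Sᵀ * stdJ n * S) := by simp only [Matrix.mul_assoc]
    _ = (-(stdJ n)) * stdJ n := by rw [hS]
    _ = 1 := by rw [Matrix.neg_mul, J_mul_J, neg_neg]

lemma symplectic_inv {S : Matrix (Fin n ⊕ Fin n) (Fin n ⊕ Fin n) ℝ}
    (hS : IsSymplectic S) : (S⁻¹)ᵀ * stdJ n * S⁻¹ = stdJ n := by
  have hu : IsUnit S.det := (Matrix.isUnit_iff_isUnit_det S).mp (isUnit_of_symplectic hS)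
  have h1 : S * S⁻¹ = 1 := Matrix.mul_nonsing_inv S hu
  have h2 : S⁻¹ * S = 1 := Matrix.nonsing_inv_mul S hu
  calc (S⁻¹)ᵀ * stdJ n * S⁻¹ = (S⁻¹)ᵀ * (Sᵀ * stdJ n * S) * S⁻¹ := by rw [hS]
    _ = (S * S⁻¹)ᵀ * stdJ n * (S * S⁻¹) := by
        rw [Matrix.transpose_mul]; simp only [Matrix.mul_assoc]
    _ = stdJ n := by rw [h1]; simp

lemma contract {hb : ℝ} (hhb : 0 < hb) (U : Matrix (Fin n ⊕ Fin n) (Fin n ⊕ Fin n) ℝ)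
    (h : ∀ z : (Fin n ⊕ Fin n) → ℝ, z ⬝ᵥ z ≤ hb → (U *ᵥ z) ⬝ᵥ (U *ᵥ z) ≤ hb)
    (z : (Fin n ⊕ Fin n) → ℝ) : (U *ᵥ z) ⬝ᵥ (U *ᵥ z) ≤ z ⬝ᵥ z := by
  rcases eq_or_ne (z ⬝ᵥ z) 0 with h0 | h0
  · have hz : z = 0 := dotProduct_self_eq_zero.mp h0
    simp [hz, h0]
  · have ha : 0 < z ⬝ᵥ z := lt_of_le_of_ne (dot_self_nonneg z) (Ne.symm h0)
    set c := Real.sqrt (hb / (z ⬝ᵥ z)) with hc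
    have hc2 : c * c = hb / (z ⬝ᵥ z) := Real.mul_self_sqrt (by positivity)
    have hcpos : 0 < c * c := by rw [hc2]; positivity
    have hsz : (c • z) ⬝ᵥ (c • z) = (c * c) * (z ⬝ᵥ z) := by
      rw [smul_dotProduct, dotProduct_smul, smul_eq_mul, smul_eq_mul]; ring
    have hle : (c • z) ⬝ᵥ (c • z) ≤ hb := by
      rw [hsz, hc2, div_mul_cancel₀ _ (ne_of_gt ha)]
    have := h (c • z) hle
    rw [Matrix.mulVec_smul, smul_dotProduct, dotProduct_smul,
      smul_eq_mul, smul_eq_mul, ← mul_assoc] at this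
    have hhb' : hb = (c * c) * (z ⬝ᵥ z) := by rw [hc2, div_mul_cancel₀ _ (ne_of_gt ha)]
    rw [hhb'] at this
    exact le_of_mul_le_mul_left (by linarith [this]) hcpos

lemma orth_of_isometry (U : Matrix (Fin n ⊕ Fin n) (Fin n ⊕ Fin n) ℝ)
    (h : ∀ z : (Fin n ⊕ Fin n) → ℝ, (U *ᵥ z) ⬝ᵥ (U *ᵥ z) = z ⬝ᵥ z) : Uᵀ * U = 1 := by
  have key : ∀ x y : (Fin n ⊕ Fin n) → ℝ, (U *ᵥ x) ⬝ᵥ (U *ᵥ y) = x ⬝ᵥ y := by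
    intro x y
    have hxy := h (x + y)
    have hx := h x
    have hy := h y
    rw [Matrix.mulVec_add] at hxy
    simp only [add_dotProduct, dotProduct_add] at hxy
    have c1 : (U *ᵥ y) ⬝ᵥ (U *ᵥ x) = (U *ᵥ x) ⬝ᵥ (U *ᵥ y) := dotProduct_comm _ _
    have c2 : y ⬝ᵥ x = x ⬝ᵥ y := dotProduct_comm _ _
    linarith
  ext i j
  have hk := key (Pi.single i 1) (Pi.single j 1)
  rw [Matrix.mulVec_single_one, Matrix.mulVec_single_one,
    single_one_dotProduct, Pi.single_apply] at hk
  rw [Matrix.mul_apply]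
  simp only [Matrix.transpose_apply] at hk ⊢
  rw [Matrix.one_apply]
  simp only [dotProduct, Matrix.transpose_apply] at hk
  exact hk

lemma image_ball_self {hb : ℝ} (hhb : 0 < hb)
    (U : Matrix (Fin n ⊕ Fin n) (Fin n ⊕ Fin n) ℝ) (hUo : Uᵀ * U = 1) :
    (fun z => U.mulVec z) '' {z : (Fin n ⊕ Fin n) → ℝ | z ⬝ᵥ z ≤ hb} =
      {z : (Fin n ⊕ Fin n) → ℝ | z ⬝ᵥ z ≤ hb} := by
  have hUo' : U * Uᵀ = 1 := mul_eq_one_comm.mp hUo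
  apply Set.Subset.antisymm
  · rintro _ ⟨z, hz, rfl⟩
    simpa [dot_mulVec_mulVec, hUo] using hz
  · intro z hz
    refine ⟨Uᵀ *ᵥ z, ?_, ?_⟩
    · have : (Uᵀ *ᵥ z) ⬝ᵥ (Uᵀ *ᵥ z) = z ⬝ᵥ z := by
        rw [dot_mulVec_mulVec, Matrix.transpose_transpose, hUo', Matrix.one_mulVec]
      simpa [this] using hz
    · simp [Matrix.mulVec_mulVec, hUo', Matrix.one_mulVec]

end SympAux

open SympAux

/-- Two symplectic matrices give the same image of the closed ball of radius `√ħ`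
centered at the origin if and only if they differ by a symplectic rotation
`U ∈ Sp(2n,ℝ) ∩ O(2n,ℝ)`. -/
theorem image_ball_eq_iff_symplectic_rotation {n : ℕ} (hn : 1 ≤ n) (hb : ℝ) (hhb : 0 < hb)
    (S S' : Matrix (Fin n ⊕ Fin n) (Fin n ⊕ Fin n) ℝ)
    (hS : IsSymplectic S) (hS' : IsSymplectic S') :
    ((fun z => S.mulVec z) ''
        {z : (Fin n ⊕ Fin n) → ℝ | Real.sqrt (z ⬝ᵥ z) ≤ Real.sqrt hb} =
      (fun z => S'.mulVec z) ''
        {z : (Fin n ⊕ Fin n) → ℝ | Real.sqrt (z ⬝ᵥ z) ≤ Real.sqrt hb}) ↔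
      ∃ U : Matrix (Fin n ⊕ Fin n) (Fin n ⊕ Fin n) ℝ,
        IsSymplectic U ∧ Uᵀ * U = 1 ∧ S' = S * U := by
  have hball : {z : (Fin n ⊕ Fin n) → ℝ | Real.sqrt (z ⬝ᵥ z) ≤ Real.sqrt hb} =
      {z : (Fin n ⊕ Fin n) → ℝ | z ⬝ᵥ z ≤ hb} := by
    ext z
    exact Real.sqrt_le_sqrt_iff (le_of_lt hhb)
  rw [hball]
  have hSu : IsUnit S.det := (Matrix.isUnit_iff_isUnit_det S).mp (isUnit_of_symplectic hS)
  have hS'u : IsUnit S'.det := (Matrix.isUnit_iff_isUnit_det S').mp (isUnit_of_symplectic hS')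
  constructor
  · intro h
    set U := S⁻¹ * S' with hUdef
    set V := S'⁻¹ * S with hVdef
    have hSU : S * U = S' := by
      rw [hUdef, ← Matrix.mul_assoc, Matrix.mul_nonsing_inv S hSu, Matrix.one_mul]
    have hSV : S' * V = S := by
      rw [hVdef, ← Matrix.mul_assoc, Matrix.mul_nonsing_inv S' hS'u, Matrix.one_mul]
    have hVU : V * U = 1 := by
      rw [hVdef, hUdef, Matrix.mul_assoc, ← Matrix.mul_assoc S S⁻¹,
        Matrix.mul_nonsing_inv S hSu, Matrix.one_mul, Matrix.nonsing_inv_mul S' hS'u]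
    -- U maps the ball into the ball
    have hUc : ∀ z : (Fin n ⊕ Fin n) → ℝ, z ⬝ᵥ z ≤ hb → (U *ᵥ z) ⬝ᵥ (U *ᵥ z) ≤ hb := by
      intro z hz
      have hmem : S' *ᵥ z ∈ (fun z => S.mulVec z) '' {z : (Fin n ⊕ Fin n) → ℝ | z ⬝ᵥ z ≤ hb} := by
        rw [h]; exact ⟨z, hz, rfl⟩
      obtain ⟨w, hw, hww⟩ := hmem
      have : U *ᵥ z = w := by
        rw [hUdef, ← Matrix.mulVec_mulVec, ← hww, Matrix.mulVec_mulVec,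
          Matrix.nonsing_inv_mul S hSu, Matrix.one_mulVec]
      rw [this]; exact hw
    have hVc : ∀ z : (Fin n ⊕ Fin n) → ℝ, z ⬝ᵥ z ≤ hb → (V *ᵥ z) ⬝ᵥ (V *ᵥ z) ≤ hb := by
      intro z hz
      have hmem : S *ᵥ z ∈ (fun z => S'.mulVec z) '' {z : (Fin n ⊕ Fin n) → ℝ | z ⬝ᵥ z ≤ hb} := by
        rw [← h]; exact ⟨z, hz, rfl⟩
      obtain ⟨w, hw, hww⟩ := hmem
      have : V *ᵥ z = w := by
        rw [hVdef, ← Matrix.mulVec_mulVec, ← hww, Matrix.mulVec_mulVec,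
          Matrix.nonsing_inv_mul S' hS'u, Matrix.one_mulVec]
      rw [this]; exact hw
    have hiso : ∀ z : (Fin n ⊕ Fin n) → ℝ, (U *ᵥ z) ⬝ᵥ (U *ᵥ z) = z ⬝ᵥ z := by
      intro z
      refine le_antisymm (contract hhb U hUc z) ?_
      have h1 := contract hhb V hVc (U *ᵥ z)
      have h2 : V *ᵥ (U *ᵥ z) = z := by
        rw [Matrix.mulVec_mulVec, hVU, Matrix.one_mulVec]
      rwa [h2] at h1
    refine ⟨U, ?_, orth_of_isometry U hiso, hSU.symm⟩
    -- U is symplectic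
    have hinv := symplectic_inv hS
    show Uᵀ * stdJ n * U = stdJ n
    rw [hUdef, Matrix.transpose_mul]
    calc S'ᵀ * (S⁻¹)ᵀ * stdJ n * (S⁻¹ * S')
        = S'ᵀ * ((S⁻¹)ᵀ * stdJ n * S⁻¹) * S' := by simp only [Matrix.mul_assoc]
      _ = S'ᵀ * stdJ n * S' := by rw [hinv]
      _ = stdJ n := hS'
  · rintro ⟨U, hUs, hUo, rfl⟩
    have himg : (fun z => (S * U).mulVec z) '' {z : (Fin n ⊕ Fin n) → ℝ | z ⬝ᵥ z ≤ hb} =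
        (fun z => S.mulVec z) '' ((fun z => U.mulVec z) ''
          {z : (Fin n ⊕ Fin n) → ℝ | z ⬝ᵥ z ≤ hb}) := by
      rw [Set.image_image]
      apply Set.image_congr'
      intro z
      rw [Matrix.mulVec_mulVec]
    rw [himg, image_ball_self hhb U hUo]
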